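/- Let R be the local model algebra described in the context. Then R is a free S-module of rank equal to the order of G; more precisely, the images in R of the variables s_a, for a ∈ G (with s_0 = 1), form a basis of R as an S-module. -/

import Mathlib

open Polynomial

noncomputable section
set_option linter.unusedSectionVars false
set_option maxHeartbeats 1000000

/-- The prime ideal `(t) ⊆ ℂ[t]`. -/
abbrev Spr : Ideal (Polynomial ℂ) := Ideal.span {(X : Polynomial ℂ)}

instance : Spr.IsPrime :=
  (Ideal.span_singleton_prime Polynomial.X_ne_zero).mpr Polynomial.prime_X

/-- `S = ℂ[t]_(t)`, the localization of `ℂ[t]` at the prime ideal `(t)`. -/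
abbrev Sloc := Localization.AtPrime Spr

instance SlocCommRing : CommRing Sloc := inferInstance
instance SlocCommSemiring : CommSemiring Sloc := SlocCommRing.toCommSemiring

/-- The element `t ∈ S`. -/
def tS : Sloc := algebraMap (Polynomial ℂ) Sloc X

/-- The residue map `ev₀ : S → ℂ`, `t ↦ 0`. -/
def ev₀ : Sloc →+* ℂ :=
  IsLocalization.lift (M := Spr.primeCompl) (S := Sloc)
    (g := Polynomial.evalRingHom (0 : ℂ))
    (fun y => by
      have hy : (y : Polynomial ℂ) ∉ Spr := y.2
      rw [isUnit_iff_ne_zero]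
      intro h0
      apply hy
      rw [Ideal.mem_span_singleton]
      refine Polynomial.X_dvd_iff.mpr ?_
      rw [Polynomial.coeff_zero_eq_eval_zero]
      simpa using h0)

section Twisted

variable {G : Type} [AddCommGroup G]

/-- Data of a normalized symmetric 2-cocycle on `G` with values in `Sloc`. -/
structure TwistData (G : Type) [AddCommGroup G] : Type where
  c : G → G → Sloc
  c_zero_right : ∀ a, c a 0 = 1
  c_comm : ∀ a b, c a b = c b a
  c_cocycle : ∀ a b d, c a b * c (a + b) d = c a (b + d) * c b d

/-- Type synonym for the twisted group algebra `G → Sloc`. -/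
def TwA (_D : TwistData G) : Type := G → Sloc

namespace TwA

variable {D : TwistData G}

instance : AddCommGroup (TwA D) := Pi.addCommGroup
instance : Module Sloc (TwA D) := Pi.module _ _ _

variable [Fintype G] [DecidableEq G]

instance : One (TwA D) := ⟨fun x => if x = 0 then (1 : Sloc) else 0⟩
instance : Mul (TwA D) := ⟨fun f g x => ∑ a : G, D.c a (x - a) * f a * g (x - a)⟩

lemma mul_apply (f g : TwA D) (x : G) :
    (f * g) x = ∑ a : G, D.c a (x - a) * f a * g (x - a) := rfl

lemma one_apply (x : G) : (1 : TwA D) x = if x = 0 then (1 : Sloc) else 0 := rfl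

lemma add_apply (f g : TwA D) (x : G) : (f + g) x = f x + g x := rfl
lemma zero_apply (x : G) : (0 : TwA D) x = 0 := rfl
lemma smul_apply (r : Sloc) (f : TwA D) (x : G) : (r • f) x = r * f x := rfl

lemma sum_apply {ι : Type*} (s : Finset ι) (F : ι → TwA D) (x : G) :
    (∑ i ∈ s, F i) x = ∑ i ∈ s, F i x := by
  classical
  induction s using Finset.induction_on with
  | empty => rfl
  | insert _ _ hi ih =>
    rw [Finset.sum_insert hi, Finset.sum_insert hi, add_apply, ih]

lemma mul_one' (f : TwA D) : f * 1 = f := by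
  funext x
  rw [mul_apply]
  rw [Finset.sum_eq_single x]
  · rw [sub_self, one_apply, if_pos rfl, D.c_zero_right, one_mul, mul_one]
  · intro b _ hb
    rw [one_apply, if_neg (sub_ne_zero.mpr (Ne.symm hb)), mul_zero]
  · intro h; exact absurd (Finset.mem_univ x) h

lemma mul_comm' (f g : TwA D) : f * g = g * f := by
  funext x
  rw [mul_apply, mul_apply]
  apply Fintype.sum_equiv (Equiv.subLeft x)
  intro a
  simp only [Equiv.subLeft_apply, sub_sub_cancel]
  rw [D.c_comm]
  ring

lemma mul_assoc' (f g h : TwA D) : f * g * h = f * (g * h) := by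
  funext x
  rw [mul_apply, mul_apply]
  simp only [mul_apply]
  rw [show (∑ b : G, D.c b (x - b) * (∑ a : G, D.c a (b - a) * f a * g (b - a)) * h (x - b))
      = ∑ b : G, ∑ a : G, D.c b (x - b) * (D.c a (b - a) * f a * g (b - a)) * h (x - b) by
    refine Finset.sum_congr rfl fun b _ => ?_
    rw [Finset.mul_sum, Finset.sum_mul]]
  rw [show (∑ a : G, D.c a (x - a) * f a * (∑ u : G, D.c u (x - a - u) * g u * h (x - a - u)))
      = ∑ a : G, ∑ u : G, D.c a (x - a) * f a * (D.c u (x - a - u) * g u * h (x - a - u)) by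
    refine Finset.sum_congr rfl fun a _ => ?_
    rw [Finset.mul_sum]]
  refine Eq.trans (Fintype.sum_prod_type (f := fun p : G × G =>
      D.c p.1 (x - p.1) * (D.c p.2 (p.1 - p.2) * f p.2 * g (p.1 - p.2)) * h (x - p.1))).symm
    (Eq.trans ?_ (Fintype.sum_prod_type (f := fun p : G × G =>
      D.c p.1 (x - p.1) * f p.1 * (D.c p.2 (x - p.1 - p.2) * g p.2 * h (x - p.1 - p.2)))))
  refine (Fintype.sum_equiv ⟨fun p => (p.1 + p.2, p.1), fun p => (p.2, p.1 - p.2),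
    fun p => by simp, fun p => by simp⟩ _ _ fun p => ?_).symm
  obtain ⟨a, u⟩ := p
  simp only [Equiv.coe_fn_mk]
  rw [add_sub_cancel_left, ← sub_sub]
  have key := D.c_cocycle a u (x - a - u)
  rw [show u + (x - a - u) = x - a by abel] at key
  linear_combination (-(f a * g u * h (x - a - u))) * key

instance : CommRing (TwA D) :=
  { (inferInstance : AddCommGroup (TwA D)), (inferInstance : One (TwA D)),
    (inferInstance : Mul (TwA D)) with
    mul_assoc := mul_assoc'
    mul_comm := mul_comm'
    mul_one := mul_one'
    one_mul := fun f => by rw [mul_comm']; exact mul_one' f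
    left_distrib := fun f g h => by
      funext x
      simp only [mul_apply, add_apply, ← Finset.sum_add_distrib]
      exact Finset.sum_congr rfl fun a _ => by ring
    right_distrib := fun f g h => by
      funext x
      simp only [mul_apply, add_apply, ← Finset.sum_add_distrib]
      exact Finset.sum_congr rfl fun a _ => by ring
    zero_mul := fun f => by
      funext x
      simp only [mul_apply, zero_apply, mul_zero, zero_mul, Finset.sum_const_zero]
    mul_zero := fun f => by
      funext x
      simp only [mul_apply, zero_apply, mul_zero, zero_mul, Finset.sum_const_zero] }

instance : Algebra Sloc (TwA D) :=
  Algebra.ofModule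
    (fun r f g => by
      funext x
      simp only [mul_apply, smul_apply, Finset.mul_sum]
      exact Finset.sum_congr rfl fun a _ => by ring)
    (fun r f g => by
      funext x
      simp only [mul_apply, smul_apply, Finset.mul_sum]
      exact Finset.sum_congr rfl fun a _ => by ring)

/-- The basis element `e_a`. -/
def single (D : TwistData G) (a : G) : TwA D := fun x => if x = a then (1 : Sloc) else 0

lemma single_apply (a x : G) : single D a x = if x = a then (1 : Sloc) else 0 := rfl

lemma single_zero : single D 0 = (1 : TwA D) := rfl

lemma single_mul_single (a b : G) :
    single D a * single D b = D.c a b • single D (a + b) := by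
  funext x
  rw [mul_apply, smul_apply, Finset.sum_eq_single a]
  · rw [single_apply, if_pos rfl, mul_one, single_apply, single_apply]
    by_cases h : x = a + b
    · subst h
      rw [add_sub_cancel_left, if_pos rfl, if_pos rfl, mul_one]
    · rw [if_neg (fun hc => h (by rw [← hc]; abel)), if_neg h, mul_zero, mul_zero]
  · intro u _ hu
    rw [single_apply, if_neg hu, mul_zero, zero_mul]
  · intro h; exact absurd (Finset.mem_univ a) h

end TwA

end Twisted

/-- `λ(a,b) = ℓ̃(a) + ℓ̃(b) - ℓ̃(a+b)`, as a natural number. -/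
def lamNat {G : Type} [AddCommGroup G] (ℓ : G → ℚ) (a b : G) : ℕ :=
  (ℓ a + ℓ b - ℓ (a + b)).num.toNat

/-- The ideal of relations `s₀ - 1` and `t^{λ(a,b)}·s_{a+b} - ε(a,b)·s_a·s_b`. -/
def relIdeal (G : Type) [AddCommGroup G] (ℓ : G → ℚ) (ε : G → G → Slocˣ) :
    Ideal (MvPolynomial G Sloc) :=
  Ideal.span ({MvPolynomial.X 0 - 1} ∪
    Set.range (fun p : G × G =>
      MvPolynomial.C tS ^ lamNat ℓ p.1 p.2 * MvPolynomial.X (p.1 + p.2) -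
        MvPolynomial.C ((ε p.1 p.2 : Sloc)) * MvPolynomial.X p.1 * MvPolynomial.X p.2))

/-- The local model algebra `R = S[s_a : a ∈ G]/I`. -/
abbrev LocalModel (G : Type) [AddCommGroup G] (ℓ : G → ℚ) (ε : G → G → Slocˣ) :=
  MvPolynomial G Sloc ⧸ relIdeal G ℓ ε

/-- The image of the variable `s_a` in `R`. -/
def sVar {G : Type} [AddCommGroup G] (ℓ : G → ℚ) (ε : G → G → Slocˣ) (a : G) :
    LocalModel G ℓ ε :=
  Ideal.Quotient.mk (relIdeal G ℓ ε) (MvPolynomial.X a)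

/-- The image of `t` in `R`. -/
def tR {G : Type} [AddCommGroup G] (ℓ : G → ℚ) (ε : G → G → Slocˣ) :
    LocalModel G ℓ ε :=
  algebraMap Sloc (LocalModel G ℓ ε) tS

/-- `N`, the lcm of the denominators of the `ℓ̃(a)`. -/
def ramOrder (G : Type) [AddCommGroup G] [Fintype G] (ℓ : G → ℚ) : ℕ :=
  Finset.univ.lcm fun a : G => (ℓ a).den

/-- The local model `R` is a free `S`-module of rank `|G|`: the images of
the variables `s_a` (`a ∈ G`, with `s_0 = 1`) form a basis of `R` as an `S`-module. -/
theorem localModel_sVar_basis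
    (G : Type) [AddCommGroup G] [Fintype G]
    (ℓ : G → ℚ) (hℓ0 : ℓ 0 = 0) (hℓ_nonneg : ∀ a, 0 ≤ ℓ a) (hℓ_lt : ∀ a, ℓ a < 1)
    (hℓ_int : ∀ a b, (ℓ a + ℓ b - ℓ (a + b)).den = 1)
    (ε : G → G → Slocˣ)
    (hε_symm : ∀ a b, ε a b = ε b a)
    (hε_one : ∀ a, ε a 0 = 1)
    (hε_coc : ∀ a b c, ε a b * ε (a + b) c = ε a (b + c) * ε b c) :
    ∃ b : Module.Basis G Sloc (LocalModel G ℓ ε), ∀ a : G, b a = sVar ℓ ε a := by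
  classical
  -- basic facts about `lamNat`
  have hcast : ∀ a b : G, ((lamNat ℓ a b : ℚ)) = ℓ a + ℓ b - ℓ (a + b) := by
    intro a b
    have hq : (((ℓ a + ℓ b - ℓ (a + b)).num : ℚ)) = ℓ a + ℓ b - ℓ (a + b) :=
      (Rat.den_eq_one_iff _).mp (hℓ_int a b)
    have h1 : (-1 : ℚ) < ℓ a + ℓ b - ℓ (a + b) := by
      have := hℓ_nonneg a; have := hℓ_nonneg b; have := hℓ_lt (a + b); linarith
    have h2 : (-1 : ℤ) < (ℓ a + ℓ b - ℓ (a + b)).num := by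
      have : ((-1 : ℤ) : ℚ) < ((ℓ a + ℓ b - ℓ (a + b)).num : ℚ) := by rw [hq]; push_cast; linarith
      exact_mod_cast this
    have h3 : 0 ≤ (ℓ a + ℓ b - ℓ (a + b)).num := by omega
    rw [lamNat,
      show (((ℓ a + ℓ b - ℓ (a + b)).num.toNat : ℚ)) =
        (((ℓ a + ℓ b - ℓ (a + b)).num.toNat : ℤ) : ℚ) by push_cast; ring,
      Int.toNat_of_nonneg h3, hq]
  have hlam00 : ∀ a : G, lamNat ℓ a 0 = 0 := by
    intro a
    have : ((lamNat ℓ a 0 : ℚ)) = 0 := by rw [hcast, hℓ0, add_zero, add_zero, sub_self]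
    exact_mod_cast this
  have hlcomm : ∀ a b : G, lamNat ℓ a b = lamNat ℓ b a := by
    intro a b
    have : ((lamNat ℓ a b : ℚ)) = ((lamNat ℓ b a : ℚ)) := by
      rw [hcast, hcast, add_comm (ℓ a), add_comm a b]
    exact_mod_cast this
  have hlcoc : ∀ a b d : G,
      lamNat ℓ a b + lamNat ℓ (a + b) d = lamNat ℓ a (b + d) + lamNat ℓ b d := by
    intro a b d
    have : ((lamNat ℓ a b + lamNat ℓ (a + b) d : ℕ) : ℚ) =
        ((lamNat ℓ a (b + d) + lamNat ℓ b d : ℕ) : ℚ) := by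
      push_cast [hcast]
      rw [add_assoc a b d]
      ring
    exact_mod_cast this
  -- the twist data
  let D : TwistData G :=
    { c := fun a b => (((ε a b)⁻¹ : Slocˣ) : Sloc) * tS ^ lamNat ℓ a b
      c_zero_right := fun a => by
        simp only [hε_one, inv_one, hlam00, pow_zero, Units.val_one, one_mul]
      c_comm := fun a b => by simp only [hε_symm a b, hlcomm a b]
      c_cocycle := fun a b d => by
        have hinv : (((ε a b)⁻¹ : Slocˣ) : Sloc) * (((ε (a + b) d)⁻¹ : Slocˣ) : Sloc) =
            (((ε a (b + d))⁻¹ : Slocˣ) : Sloc) * (((ε b d)⁻¹ : Slocˣ) : Sloc) := by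
          rw [← Units.val_mul, ← Units.val_mul, ← mul_inv, ← mul_inv, hε_coc]
        calc (((ε a b)⁻¹ : Slocˣ) : Sloc) * tS ^ lamNat ℓ a b *
              ((((ε (a + b) d)⁻¹ : Slocˣ) : Sloc) * tS ^ lamNat ℓ (a + b) d)
            = ((((ε a b)⁻¹ : Slocˣ) : Sloc) * (((ε (a + b) d)⁻¹ : Slocˣ) : Sloc)) *
              tS ^ (lamNat ℓ a b + lamNat ℓ (a + b) d) := by rw [pow_add]; ring
          _ = ((((ε a (b + d))⁻¹ : Slocˣ) : Sloc) * (((ε b d)⁻¹ : Slocˣ) : Sloc)) *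
              tS ^ (lamNat ℓ a (b + d) + lamNat ℓ b d) := by rw [hinv, hlcoc]
          _ = (((ε a (b + d))⁻¹ : Slocˣ) : Sloc) * tS ^ lamNat ℓ a (b + d) *
              ((((ε b d)⁻¹ : Slocˣ) : Sloc) * tS ^ lamNat ℓ b d) := by rw [pow_add]; ring }
  have hDc : ∀ a b : G, D.c a b = (((ε a b)⁻¹ : Slocˣ) : Sloc) * tS ^ lamNat ℓ a b :=
    fun _ _ => rfl
  -- the evaluation algebra morphism to the twisted group algebra
  let φ : MvPolynomial G Sloc →ₐ[Sloc] TwA D := MvPolynomial.aeval (TwA.single D)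
  have hφX : ∀ a : G, φ (MvPolynomial.X a) = TwA.single D a :=
    fun a => MvPolynomial.aeval_X _ a
  have hφC : ∀ r : Sloc, φ (MvPolynomial.C r) = algebraMap Sloc (TwA D) r :=
    fun r => MvPolynomial.aeval_C _ r
  have hsmulA : ∀ (r : Sloc) (z : TwA D),
      r • z = algebraMap Sloc (TwA D) r * z := fun r z => Algebra.smul_def r z
  have hker : relIdeal G ℓ ε ≤ RingHom.ker (φ : MvPolynomial G Sloc →+* TwA D) := by
    rw [relIdeal]
    refine Ideal.span_le.mpr ?_
    rintro q (rfl | ⟨⟨a, b⟩, rfl⟩) <;> rw [SetLike.mem_coe, RingHom.mem_ker]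
    · show φ _ = 0
      rw [map_sub, map_one, hφX, TwA.single_zero, sub_self]
    · show φ (MvPolynomial.C tS ^ lamNat ℓ a b * MvPolynomial.X (a + b) -
        MvPolynomial.C ((ε a b : Sloc)) * MvPolynomial.X a * MvPolynomial.X b) = 0
      rw [show (MvPolynomial.C tS ^ lamNat ℓ a b : MvPolynomial G Sloc) =
        MvPolynomial.C (tS ^ lamNat ℓ a b) from (map_pow _ _ _).symm]
      rw [map_sub, map_mul, map_mul, map_mul, hφC, hφC, hφX, hφX, hφX,
        mul_assoc, TwA.single_mul_single, ← hsmulA, ← hsmulA,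
        smul_smul, hDc, ← mul_assoc, Units.mul_inv, one_mul, sub_self]
  have hφvan : ∀ p ∈ relIdeal G ℓ ε, φ p = 0 := fun p hp => RingHom.mem_ker.mp (hker hp)
  let ψ : LocalModel G ℓ ε →ₐ[Sloc] TwA D := Ideal.Quotient.liftₐ (relIdeal G ℓ ε) φ hφvan
  have hψs : ∀ a : G, ψ (sVar ℓ ε a) = TwA.single D a := by
    intro a
    rw [sVar, Ideal.Quotient.liftₐ_apply]
    exact MvPolynomial.aeval_X _ a
  -- key relation in the quotient
  have hsmul : ∀ (r : Sloc) (z : LocalModel G ℓ ε),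
      r • z = algebraMap Sloc (LocalModel G ℓ ε) r * z := fun r z => Algebra.smul_def r z
  have hrel : ∀ a b : G, sVar ℓ ε a * sVar ℓ ε b = D.c a b • sVar ℓ ε (a + b) := by
    intro a b
    have hmem : (MvPolynomial.C tS ^ lamNat ℓ a b * MvPolynomial.X (a + b) -
        MvPolynomial.C ((ε a b : Sloc)) * MvPolynomial.X a * MvPolynomial.X b :
        MvPolynomial G Sloc) ∈ relIdeal G ℓ ε := by
      rw [relIdeal]
      exact Ideal.subset_span (Or.inr ⟨(a, b), rfl⟩)
    have heq : (Ideal.Quotient.mk (relIdeal G ℓ ε))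
          (MvPolynomial.C tS ^ lamNat ℓ a b * MvPolynomial.X (a + b)) =
        (Ideal.Quotient.mk (relIdeal G ℓ ε))
          (MvPolynomial.C ((ε a b : Sloc)) * MvPolynomial.X a * MvPolynomial.X b) :=
      Ideal.Quotient.eq.mpr hmem
    simp only [map_mul, map_pow] at heq
    have hmkC : ∀ r : Sloc, (Ideal.Quotient.mk (relIdeal G ℓ ε)) (MvPolynomial.C r) =
        algebraMap Sloc (LocalModel G ℓ ε) r := fun r => rfl
    rw [hmkC, hmkC] at heq
    have hu : algebraMap Sloc (LocalModel G ℓ ε) (((ε a b)⁻¹ : Slocˣ) : Sloc) *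
        algebraMap Sloc (LocalModel G ℓ ε) ((ε a b : Sloc)) = 1 := by
      rw [← map_mul, Units.inv_mul, map_one]
    rw [hsmul, hDc, map_mul, map_pow]
    simp only [sVar]
    linear_combination (-(algebraMap Sloc (LocalModel G ℓ ε) (((ε a b)⁻¹ : Slocˣ) : Sloc))) * heq
      - ((Ideal.Quotient.mk (relIdeal G ℓ ε)) (MvPolynomial.X a) *
         (Ideal.Quotient.mk (relIdeal G ℓ ε)) (MvPolynomial.X b)) * hu
  have hs0 : sVar ℓ ε 0 = 1 := by
    have hmem : (MvPolynomial.X 0 - 1 : MvPolynomial G Sloc) ∈ relIdeal G ℓ ε := by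
      rw [relIdeal]; exact Ideal.subset_span (Or.inl rfl)
    have : (Ideal.Quotient.mk (relIdeal G ℓ ε)) (MvPolynomial.X 0) =
        (Ideal.Quotient.mk (relIdeal G ℓ ε)) 1 := Ideal.Quotient.eq.mpr hmem
    rw [sVar, this, map_one]
  -- spanning
  have hspan : ⊤ ≤ Submodule.span Sloc (Set.range (fun a : G => sVar ℓ ε a)) := by
    intro z hz
    clear hz
    obtain ⟨p, rfl⟩ := Ideal.Quotient.mk_surjective z
    induction p using MvPolynomial.induction_on with
    | C r =>
      have : (Ideal.Quotient.mk (relIdeal G ℓ ε)) (MvPolynomial.C r) = r • sVar ℓ ε 0 := by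
        rw [hs0, hsmul, mul_one]
        rfl
      rw [this]
      exact Submodule.smul_mem _ r (Submodule.subset_span ⟨0, rfl⟩)
    | add p q hp hq => rw [map_add]; exact add_mem hp hq
    | mul_X p a hp =>
      rw [map_mul]
      have hmul : ∀ z ∈ Submodule.span Sloc (Set.range (fun a : G => sVar ℓ ε a)),
          z * sVar ℓ ε a ∈ Submodule.span Sloc (Set.range (fun a : G => sVar ℓ ε a)) := by
        intro z hz
        induction hz using Submodule.span_induction with
        | mem w hw =>
          obtain ⟨b, rfl⟩ := hw
          rw [hrel b a]
          exact Submodule.smul_mem _ _ (Submodule.subset_span ⟨b + a, rfl⟩)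
        | zero => rw [zero_mul]; exact Submodule.zero_mem _
        | add u v _ _ hu hv => rw [add_mul]; exact Submodule.add_mem _ hu hv
        | smul r u _ hu => rw [smul_mul_assoc]; exact Submodule.smul_mem _ r hu
      exact hmul _ hp
  -- linear independence
  have hli : LinearIndependent Sloc (fun a : G => sVar ℓ ε a) := by
    rw [Fintype.linearIndependent_iff]
    intro g hg i
    have hg' : (∑ a : G, g a • TwA.single D a) = 0 := by
      have := congrArg ψ hg
      rw [map_sum, map_zero] at this
      simpa only [map_smul, hψs] using this
    have := congrFun hg' i
    rw [TwA.sum_apply] at this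
    simpa only [TwA.smul_apply, TwA.single_apply, mul_ite, mul_one, mul_zero,
      Finset.sum_ite_eq, Finset.mem_univ, if_pos, TwA.zero_apply] using this
  exact ⟨Module.Basis.mk hli hspan, fun a => Module.Basis.mk_apply hli hspan a⟩
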